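/- Over the ring R = ℚ[a,h,x₁,x₂,x₃,x₄], the pair of matrices (U₀, U₁) defines a morphism of matrix factorizations Λ₀ from (P₀, P₁) to (Q₀, Q₁), i.e. the matrix identities U₁·P₀ = Q₀·U₀ and U₀·P₁ = Q₁·U₁ hold, where U₀ = [[x₄ − x₂, 0],[x₁ − x₂ + x₃ + 2x₄ − (3/2)h, 1]] and U₁ = [[x₄, −x₂],[−1, 1]]. -/

import Mathlib

noncomputable section

open MvPolynomial

/-- The polynomial ring `R = ℚ[a,h,x₁,x₂,x₃,x₄]`, with `a = X 0`, `h = X 1`, `xᵢ = X (i+1)`. -/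
abbrev S6 : Type := MvPolynomial (Fin 6) ℚ

noncomputable def aP : S6 := X 0
noncomputable def hP : S6 := X 1
noncomputable def x1 : S6 := X 2
noncomputable def x2 : S6 := X 3
noncomputable def x3 : S6 := X 4
noncomputable def x4 : S6 := X 5

/-- `π̄_{ij} = x_i² + x_i x_j + x_j² − (3/2)h(x_i + x_j) − 3a`. -/
noncomputable def piBar (xi xj : S6) : S6 :=
  xi ^ 2 + xi * xj + xj ^ 2 - C (3 / 2 : ℚ) * hP * (xi + xj) - 3 * aP

/-- `ū₁`. -/
noncomputable def uBar1 : S6 :=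
  (x1 + x2) ^ 2 + (x1 + x2) * (x3 + x4) + (x3 + x4) ^ 2 - 3 * x1 * x2
    - C (3 / 2 : ℚ) * hP * (x1 + x2 + x3 + x4) - 3 * aP

/-- `ū₂ = −3(x₃+x₄) + 3h`. -/
noncomputable def uBar2 : S6 := -3 * (x3 + x4) + 3 * hP

/-- `P₀`, the first differential of the factorization `C̄(Γ⁰)`. -/
noncomputable def P0 : Matrix (Fin 2) (Fin 2) S6 := !![piBar x4 x1, x2 - x3; piBar x3 x2, x4 - x1]

/-- `P₁`, the second differential of the factorization `C̄(Γ⁰)`. -/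
noncomputable def P1 : Matrix (Fin 2) (Fin 2) S6 := !![x1 - x4, x2 - x3; piBar x3 x2, -piBar x4 x1]

/-- `Q₀`, the first differential of the factorization `C̄(Γ¹)`. -/
noncomputable def Q0 : Matrix (Fin 2) (Fin 2) S6 :=
  !![uBar1, x1 * x2 - x3 * x4; uBar2, x3 + x4 - x1 - x2]

/-- `Q₁`, the second differential of the factorization `C̄(Γ¹)`. -/
noncomputable def Q1 : Matrix (Fin 2) (Fin 2) S6 :=
  !![x1 + x2 - x3 - x4, x1 * x2 - x3 * x4; uBar2, -uBar1]

noncomputable def U0 : Matrix (Fin 2) (Fin 2) S6 :=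
  !![x4 - x2, 0; x1 - x2 + x3 + 2 * x4 - C (3 / 2 : ℚ) * hP, 1]

noncomputable def U1 : Matrix (Fin 2) (Fin 2) S6 := !![x4, -x2; -1, 1]

noncomputable def V0 : Matrix (Fin 2) (Fin 2) S6 :=
  !![1, 0; -x1 + x2 - x3 - 2 * x4 + C (3 / 2 : ℚ) * hP, x4 - x2]

noncomputable def V1 : Matrix (Fin 2) (Fin 2) S6 := !![1, x2; 1, x4]

/-- `(U₀, U₁)` is a morphism of matrix factorizations
`Λ₀ : (P₀, P₁) → (Q₀, Q₁)`. -/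
lemma h32 : (C (3 / 2 : ℚ) : S6) * 2 = 3 := by
  have h : (C (3 / 2 : ℚ) : S6) * C (2 : ℚ) = C (3 : ℚ) := by rw [← map_mul]; norm_num
  simpa [map_ofNat] using h

/-- `(U₀, U₁)` is a morphism of matrix factorizations
`Λ₀ : (P₀, P₁) → (Q₀, Q₁)`. -/
theorem stmt_10 : U1 * P0 = Q0 * U0 ∧ U0 * P1 = Q1 * U1 := by
  constructor
  · apply Matrix.ext
    intro i j
    fin_cases i <;> fin_cases j <;>
      simp only [U0, U1, P0, P1, Q0, Q1, piBar, uBar1, uBar2, Matrix.mul_fin_two,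
        Fin.mk_zero, Fin.mk_one, Fin.isValue, Matrix.cons_val', Matrix.cons_val_zero,
        Matrix.cons_val_one, Matrix.head_cons, Matrix.empty_val', Matrix.cons_val_fin_one, Matrix.of_apply, Matrix.cons_val', Matrix.vecHead, Matrix.vecTail]
    · ring
    · ring
    · linear_combination (hP * (x4 - x2)) * h32
    · ring
  · apply Matrix.ext
    intro i j
    fin_cases i <;> fin_cases j <;>
      simp only [U0, U1, P0, P1, Q0, Q1, piBar, uBar1, uBar2, Matrix.mul_fin_two,
        Fin.mk_zero, Fin.mk_one, Fin.isValue, Matrix.cons_val', Matrix.cons_val_zero,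
        Matrix.cons_val_one, Matrix.head_cons, Matrix.empty_val', Matrix.cons_val_fin_one, Matrix.of_apply, Matrix.cons_val', Matrix.vecHead, Matrix.vecTail]
    · ring
    · ring
    · linear_combination (hP * x4) * h32
    · linear_combination (-(hP * x2)) * h32

end
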